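/- Let L be an n×n real symmetric positive semidefinite matrix with L·1 = 0 and rank(L) = n−1 (the weighted Laplacian of a connected graph), and let λ₂ > 0 be a constant such that xᵀ L x ≥ λ₂ ‖x‖² for every x ∈ ℝⁿ with xᵀ1 = 0. For distinct nodes i and j, let R_ij = (e_i − e_j)ᵀ L⁺ (e_i − e_j) and R̃_ij = dᵀ (L_SS)⁺ d, where L_SS = [[L_ii, L_ij],[L_ji, L_jj]] and d = (1, −1)ᵀ. Then for all pairwise distinct i, j, k, the approximation error on effective resistance differences satisfies |(R̃_ij − R̃_ik) − (R_ij − R_ik)| ≤ 2/λ₂. -/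

import Mathlib

open Matrix

/-- `G` satisfies the four Penrose equations for `A`, i.e. `G` is the Moore–Penrose
pseudoinverse of `A`. -/
def IsMoorePenrose {m n : ℕ} (A : Matrix (Fin m) (Fin n) ℝ)
    (G : Matrix (Fin n) (Fin m) ℝ) : Prop :=
  A * G * A = A ∧ G * A * G = G ∧ (A * G)ᵀ = A * G ∧ (G * A)ᵀ = G * A

lemma mp_unique {n : ℕ} {A G H : Matrix (Fin n) (Fin n) ℝ}
    (hG : IsMoorePenrose A G) (hH : IsMoorePenrose A H) : G = H := by
  obtain ⟨hG1, hG2, hG3, hG4⟩ := hG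
  obtain ⟨hH1, hH2, hH3, hH4⟩ := hH
  have e1 : A * G = A * H := by
    calc A * G = (A * G)ᵀ := hG3.symm
      _ = ((A * H) * (A * G))ᵀ := by
          rw [show (A * H) * (A * G) = (A * H * A) * G by
            simp only [Matrix.mul_assoc], hH1]
      _ = (A * G)ᵀ * (A * H)ᵀ := transpose_mul _ _
      _ = (A * G) * (A * H) := by rw [hG3, hH3]
      _ = (A * G * A) * H := by simp only [Matrix.mul_assoc]
      _ = A * H := by rw [hG1]
  have e2 : G * A = H * A := by
    calc G * A = (G * A)ᵀ := hG4.symm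
      _ = ((G * A) * (H * A))ᵀ := by
          rw [show (G * A) * (H * A) = G * (A * H * A) by
            simp only [Matrix.mul_assoc], hH1]
      _ = (H * A)ᵀ * (G * A)ᵀ := transpose_mul _ _
      _ = (H * A) * (G * A) := by rw [hG4, hH4]
      _ = H * (A * G * A) := by simp only [Matrix.mul_assoc]
      _ = H * A := by rw [hG1]
  calc G = G * A * G := hG2.symm
    _ = G * (A * H) := by rw [Matrix.mul_assoc, e1]
    _ = (G * A) * H := by rw [Matrix.mul_assoc]
    _ = H * A * H := by rw [e2]
    _ = H := hH2

lemma mp_transpose {n : ℕ} {A G : Matrix (Fin n) (Fin n) ℝ}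
    (hG : IsMoorePenrose A G) : IsMoorePenrose Aᵀ Gᵀ := by
  obtain ⟨hG1, hG2, hG3, hG4⟩ := hG
  refine ⟨?_, ?_, ?_, ?_⟩
  · rw [← transpose_mul, ← transpose_mul, ← Matrix.mul_assoc, hG1]
  · rw [← transpose_mul, ← transpose_mul, ← Matrix.mul_assoc, hG2]
  · rw [← transpose_mul, transpose_transpose]
    exact hG4.symm
  · rw [← transpose_mul, transpose_transpose]
    exact hG3.symm

lemma mp_symm {n : ℕ} {A G : Matrix (Fin n) (Fin n) ℝ}
    (hA : Aᵀ = A) (hG : IsMoorePenrose A G) : Gᵀ = G := by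
  have h := mp_transpose hG
  rw [hA] at h
  exact mp_unique h hG

lemma dot_mulVec_eq {n : ℕ} (A : Matrix (Fin n) (Fin n) ℝ) (v w : Fin n → ℝ) :
    v ⬝ᵥ A *ᵥ w = (Aᵀ *ᵥ v) ⬝ᵥ w := by
  rw [dotProduct_mulVec, mulVec_transpose]

lemma squad {n : ℕ} (A : Matrix (Fin n) (Fin n) ℝ) (a b : Fin n) :
    Pi.single a (1 : ℝ) ⬝ᵥ A *ᵥ Pi.single b 1 = A a b := by
  simp [Matrix.mulVec, dotProduct_single, single_dotProduct]

lemma dot_self_nonneg {n : ℕ} (v : Fin n → ℝ) : 0 ≤ v ⬝ᵥ v :=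
  Finset.sum_nonneg fun i _ => mul_self_nonneg (v i)

lemma pair_bound {n : ℕ} (L : Matrix (Fin n) (Fin n) ℝ)
    (hL : L.PosSemidef) (h1 : L.mulVec (fun _ => (1 : ℝ)) = 0)
    (lam2 : ℝ) (hlam2 : 0 < lam2)
    (hconn : ∀ x : Fin n → ℝ, x ⬝ᵥ (fun _ => (1 : ℝ)) = 0 →
      lam2 * (x ⬝ᵥ x) ≤ x ⬝ᵥ L.mulVec x)
    (Lp : Matrix (Fin n) (Fin n) ℝ) (hLp : IsMoorePenrose L Lp)
    (a b : Fin n) (hab : a ≠ b)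
    (S : Matrix (Fin 2) (Fin 2) ℝ)
    (hS : IsMoorePenrose !![L a a, L a b; L b a, L b b] S) :
    0 ≤ ![(1 : ℝ), -1] ⬝ᵥ S.mulVec ![(1 : ℝ), -1] ∧
    ![(1 : ℝ), -1] ⬝ᵥ S.mulVec ![(1 : ℝ), -1] ≤
      (Pi.single a 1 - Pi.single b 1) ⬝ᵥ Lp.mulVec (Pi.single a 1 - Pi.single b 1) ∧
    (Pi.single a 1 - Pi.single b 1) ⬝ᵥ Lp.mulVec (Pi.single a 1 - Pi.single b 1) ≤ 2 / lam2 := by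
  have hLT : Lᵀ = L := hL.1
  have hPSD : ∀ v : Fin n → ℝ, 0 ≤ v ⬝ᵥ L *ᵥ v := fun v => by
    simpa using hL.dotProduct_mulVec_nonneg v
  obtain ⟨p1, p2, p3, p4⟩ := hLp
  have hLpT : Lpᵀ = Lp := mp_symm hLT ⟨p1, p2, p3, p4⟩
  have hcomm : Lp * L = L * Lp := by
    have := p3
    rw [transpose_mul, hLpT, hLT] at this
    exact this
  -- Lp kills the all-ones vector
  have hLpone : Lp *ᵥ (fun _ => (1 : ℝ)) = 0 := by
    have h2 : (L * Lp) *ᵥ (fun _ => (1 : ℝ)) = 0 := by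
      rw [← hcomm, ← mulVec_mulVec, h1, mulVec_zero]
    calc Lp *ᵥ (fun _ => (1 : ℝ)) = (Lp * (L * Lp)) *ᵥ (fun _ => (1 : ℝ)) := by
          rw [← Matrix.mul_assoc, p2]
      _ = Lp *ᵥ ((L * Lp) *ᵥ (fun _ => (1 : ℝ))) := (mulVec_mulVec _ _ _).symm
      _ = 0 := by rw [h2, mulVec_zero]
  -- projection property: L (Lp x) = x for x ⊥ 1
  have hproj : ∀ x : Fin n → ℝ, x ⬝ᵥ (fun _ => (1 : ℝ)) = 0 →
      L *ᵥ (Lp *ᵥ x) = x := by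
    intro x hx
    set v := x - L *ᵥ (Lp *ᵥ x) with hv
    have hv1 : v ⬝ᵥ (fun _ => (1 : ℝ)) = 0 := by
      have hone : (L *ᵥ (Lp *ᵥ x)) ⬝ᵥ (fun _ => (1 : ℝ)) = 0 := by
        rw [dotProduct_comm, dot_mulVec_eq, hLT, h1, zero_dotProduct]
      rw [hv, sub_dotProduct, hx, hone, sub_zero]
    have hvL : L *ᵥ v = 0 := by
      have hm : L * L * Lp = L := by
        rw [Matrix.mul_assoc, ← hcomm, ← Matrix.mul_assoc, p1]
      have : L *ᵥ (L *ᵥ (Lp *ᵥ x)) = L *ᵥ x := by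
        rw [mulVec_mulVec, mulVec_mulVec, hm]
      rw [hv, mulVec_sub, this, sub_self]
    have hc := hconn v hv1
    rw [hvL, dotProduct_zero] at hc
    have hvv : v ⬝ᵥ v = 0 := le_antisymm (by nlinarith [dot_self_nonneg v]) (dot_self_nonneg v)
    have hv0 : v = 0 := dotProduct_self_eq_zero.mp hvv
    have := sub_eq_zero.mp hv0
    exact this.symm
  -- quadratic bound: x Lp x ≤ (x⬝x)/lam2 for x ⊥ 1
  have hquad : ∀ x : Fin n → ℝ, x ⬝ᵥ (fun _ => (1 : ℝ)) = 0 →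
      x ⬝ᵥ Lp *ᵥ x ≤ (x ⬝ᵥ x) / lam2 := by
    intro x hx
    set y := Lp *ᵥ x with hy
    have hy1 : y ⬝ᵥ (fun _ => (1 : ℝ)) = 0 := by
      rw [hy, dotProduct_comm, dot_mulVec_eq, hLpT, hLpone, zero_dotProduct]
    have hxy : x ⬝ᵥ y = y ⬝ᵥ L *ᵥ y := by
      conv_lhs => rw [hy, ← p2]
      rw [← mulVec_mulVec, ← mulVec_mulVec, dot_mulVec_eq, hLpT]
    have hcs : (x ⬝ᵥ y) ^ 2 ≤ (x ⬝ᵥ x) * (y ⬝ᵥ y) := by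
      have := Finset.sum_mul_sq_le_sq_mul_sq Finset.univ x y
      simpa [dotProduct, sq] using this
    have hlow : lam2 * (y ⬝ᵥ y) ≤ x ⬝ᵥ y := by
      rw [hxy]; exact hconn y hy1
    have hyy : 0 ≤ y ⬝ᵥ y := dot_self_nonneg y
    have hxx : 0 ≤ x ⬝ᵥ x := dot_self_nonneg x
    have hgoal : (x ⬝ᵥ y) * lam2 ≤ x ⬝ᵥ x := by
      nlinarith [mul_le_mul_of_nonneg_left hlow hxx,
        mul_le_mul_of_nonneg_left hcs hlam2.le,
        mul_nonneg hlam2.le hyy]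
    rw [le_div_iff₀ hlam2]
    exact hgoal
  -- variational bound
  have hvar : ∀ x : Fin n → ℝ, x ⬝ᵥ (fun _ => (1 : ℝ)) = 0 → ∀ w : Fin n → ℝ,
      2 * (x ⬝ᵥ w) - w ⬝ᵥ L *ᵥ w ≤ x ⬝ᵥ Lp *ᵥ x := by
    intro x hx w
    set y := Lp *ᵥ x with hy
    have h0 : 0 ≤ (w - y) ⬝ᵥ L *ᵥ (w - y) := hPSD _
    have e1 : w ⬝ᵥ L *ᵥ y = w ⬝ᵥ x := by rw [hy, mulVec_mulVec, ← mulVec_mulVec, hproj x hx]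
    have e2 : y ⬝ᵥ L *ᵥ w = x ⬝ᵥ w := by
      rw [dot_mulVec_eq, hLT, hy, mulVec_mulVec, ← mulVec_mulVec, hproj x hx]
    have e3 : y ⬝ᵥ L *ᵥ y = y ⬝ᵥ x := by rw [hy, mulVec_mulVec, ← mulVec_mulVec, hproj x hx]
    have hexp : (w - y) ⬝ᵥ L *ᵥ (w - y) =
        w ⬝ᵥ L *ᵥ w - w ⬝ᵥ L *ᵥ y - y ⬝ᵥ L *ᵥ w + y ⬝ᵥ L *ᵥ y := by
      rw [mulVec_sub, sub_dotProduct, dotProduct_sub, dotProduct_sub]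
      ring
    have hyx : y ⬝ᵥ x = x ⬝ᵥ y := dotProduct_comm _ _
    have hwx : w ⬝ᵥ x = x ⬝ᵥ w := dotProduct_comm _ _
    have hLpxy : x ⬝ᵥ Lp *ᵥ x = x ⬝ᵥ y := by rw [hy]
    rw [hexp, e1, e2, e3, hyx, hwx] at h0
    linarith [h0, hLpxy.ge, hLpxy.le]
  -- 2x2 submatrix facts
  set M : Matrix (Fin 2) (Fin 2) ℝ := !![L a a, L a b; L b a, L b b] with hM
  have hE : ∀ p q : Fin n, L p q = L q p := by
    intro p q
    conv_lhs => rw [← hLT]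
    rfl
  have hMT : Mᵀ = M := by
    rw [hM]
    ext p q
    fin_cases p <;> fin_cases q <;> simp [hE a b]
  have hST : Sᵀ = S := mp_symm hMT hS
  obtain ⟨s1, s2, s3, s4⟩ := hS
  set d : Fin 2 → ℝ := ![(1 : ℝ), -1] with hd
  set z : Fin 2 → ℝ := S *ᵥ d with hz
  set x : Fin n → ℝ := Pi.single a 1 - Pi.single b 1 with hxdef
  set w : Fin n → ℝ := z 0 • (Pi.single a (1 : ℝ) : Fin n → ℝ) + z 1 • (Pi.single b (1 : ℝ) : Fin n → ℝ) with hw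
  have hzw : z ⬝ᵥ M *ᵥ z = w ⬝ᵥ L *ᵥ w := by
    have hrhs : w ⬝ᵥ L *ᵥ w =
        z 0 * z 0 * L a a + z 0 * z 1 * L a b + z 1 * z 0 * L b a + z 1 * z 1 * L b b := by
      rw [hw]
      simp only [mulVec_add, mulVec_smul, dotProduct_add, add_dotProduct,
        dotProduct_smul, smul_dotProduct, smul_eq_mul, squad]
      ring
    rw [hrhs, hM]
    simp [Matrix.mulVec, dotProduct, Fin.sum_univ_two]
    ring
  have hdz : d ⬝ᵥ z = x ⬝ᵥ w := by
    have hrhs : x ⬝ᵥ w = z 0 - z 1 := by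
      rw [hxdef, hw]
      simp [sub_dotProduct, dotProduct_add, dotProduct_smul, dotProduct_single,
        Pi.single_apply, hab, hab.symm]
      ring
    rw [hrhs, hd]
    simp [dotProduct, Fin.sum_univ_two]
    ring
  have hdSd : d ⬝ᵥ S *ᵥ d = z ⬝ᵥ M *ᵥ z := by
    conv_lhs => rw [← s2]
    rw [← mulVec_mulVec, ← mulVec_mulVec, dot_mulVec_eq, hST, ← hz]
  have hx1 : x ⬝ᵥ (fun _ => (1 : ℝ)) = 0 := by
    rw [hxdef]
    simp [sub_dotProduct, single_dotProduct]
  have hxx2 : x ⬝ᵥ x = 2 := by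
    rw [hxdef]
    simp [sub_dotProduct, dotProduct_sub, dotProduct_single, Pi.single_apply, hab, hab.symm]
    norm_num
  have hSd_eq_dz : d ⬝ᵥ S *ᵥ d = d ⬝ᵥ z := by rw [hz]
  refine ⟨?_, ?_, ?_⟩
  · rw [hdSd, hzw]
    exact hPSD w
  · have hv := hvar x hx1 w
    have : d ⬝ᵥ S *ᵥ d = 2 * (x ⬝ᵥ w) - w ⬝ᵥ L *ᵥ w := by
      rw [← hdz, ← hzw, ← hdSd]
      linarith [hSd_eq_dz]
    rw [this]
    exact hv
  · have := hquad x hx1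
    rw [hxx2] at this
    exact this

/-- For a connected graph Laplacian `L` with algebraic connectivity at least `λ₂ > 0`,
the error of the principal-submatrix approximation on effective resistance differences
satisfies `|(R̃_ij - R̃_ik) - (R_ij - R_ik)| ≤ 2 / λ₂` for all pairwise distinct
`i, j, k`. -/
theorem effective_resistance_difference_error_bound (n : ℕ)
    (L : Matrix (Fin n) (Fin n) ℝ)
    (hL : L.PosSemidef) (h1 : L.mulVec (fun _ => (1 : ℝ)) = 0)
    (hrank : L.rank = n - 1)
    (lam2 : ℝ) (hlam2 : 0 < lam2)
    (hconn : ∀ x : Fin n → ℝ, x ⬝ᵥ (fun _ => (1 : ℝ)) = 0 →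
      lam2 * (x ⬝ᵥ x) ≤ x ⬝ᵥ L.mulVec x)
    (Lp : Matrix (Fin n) (Fin n) ℝ) (hLp : IsMoorePenrose L Lp)
    (i j k : Fin n) (hij : i ≠ j) (hik : i ≠ k) (hjk : j ≠ k)
    (Spij Spik : Matrix (Fin 2) (Fin 2) ℝ)
    (hSpij : IsMoorePenrose !![L i i, L i j; L j i, L j j] Spij)
    (hSpik : IsMoorePenrose !![L i i, L i k; L k i, L k k] Spik) :
    |((![(1 : ℝ), -1] ⬝ᵥ Spij.mulVec ![(1 : ℝ), -1]) -
        (![(1 : ℝ), -1] ⬝ᵥ Spik.mulVec ![(1 : ℝ), -1])) -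
      (((Pi.single i 1 - Pi.single j 1) ⬝ᵥ
          Lp.mulVec (Pi.single i 1 - Pi.single j 1)) -
        ((Pi.single i 1 - Pi.single k 1) ⬝ᵥ
          Lp.mulVec (Pi.single i 1 - Pi.single k 1)))| ≤ 2 / lam2 := by
  obtain ⟨hij0, hij1, hij2⟩ :=
    pair_bound L hL h1 lam2 hlam2 hconn Lp hLp i j hij Spij hSpij
  obtain ⟨hik0, hik1, hik2⟩ :=
    pair_bound L hL h1 lam2 hlam2 hconn Lp hLp i k hik Spik hSpik
  rw [abs_le]
  constructor <;> linarith
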